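/- Let k be a positive integer and let f : S_{π/k} → ℍ² be given by f(z) = z^k. Then for all x, y ∈ S_{π/k}: j_{ℍ²}(f(x), f(y)) ≤ k · j_{S_{π/k}}(x, y), and the constant k is best possible: for x = r·e^{iα}, y = e^{iα} with α ∈ (0, π/(2k)) fixed, the ratio j_{ℍ²}(f(x), f(y)) / j_{S_{π/k}}(x, y) tends to k as r → 0⁺. -/

import Mathlib

open Metric Real Filter Topology Set

/-- The distance ratio metric of a domain `G`:
`j_G(x,y) = log(1 + |x-y| / min(d(x,∂G), d(y,∂G)))`. -/
noncomputable def jdist {E : Type*} [PseudoMetricSpace E] (G : Set E) (x y : E) : ℝ :=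
  Real.log (1 + dist x y /
    min (Metric.infDist x (frontier G)) (Metric.infDist y (frontier G)))

lemma le_infDist' {x : ℂ} {s : Set ℂ} {r : ℝ} (hs : s.Nonempty)
    (h : ∀ y ∈ s, r ≤ dist x y) : r ≤ Metric.infDist x s := by
  by_contra hlt
  push_neg at hlt
  obtain ⟨y, hy, hd⟩ := (Metric.infDist_lt_iff hs).1 hlt
  exact (h y hy).not_gt hd

lemma infDist_halfplane (z : ℂ) (hz : 0 ≤ z.im) :
    Metric.infDist z (frontier {z : ℂ | 0 < z.im}) = z.im := by
  rw [Complex.frontier_setOf_lt_im]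
  apply le_antisymm
  · have h0 : (z.re : ℂ) ∈ {w : ℂ | w.im = 0} := by simp
    refine (Metric.infDist_le_dist_of_mem h0).trans ?_
    rw [Complex.dist_eq]
    have h1 : z - z.re = z.im * Complex.I := by
      apply Complex.ext <;> simp
    rw [h1]
    simp [_root_.abs_of_nonneg hz]
  · refine le_infDist' ⟨0, by simp⟩ fun w hw => ?_
    have : |z.im - w.im| ≤ dist z w := by
      simpa using Complex.abs_im_le_norm (z - w) |>.trans_eq (Complex.dist_eq z w).symm
    simp only [mem_setOf_eq] at hw
    rw [hw, sub_zero] at this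
    exact (le_abs_self _).trans this

-- sector characterization
lemma sector_eq (k : ℕ) (hk : 0 < k) :
    {z : ℂ | 0 < Complex.arg z ∧ Complex.arg z < π / k} =
    {z : ℂ | 0 < z.im ∧ (z * Complex.exp (-(π / k) * Complex.I)).im < 0} := by
  have hπk : 0 < π / k := div_pos Real.pi_pos (by exact_mod_cast hk)
  have hπk' : π / k ≤ π := div_le_self Real.pi_pos.le (by exact_mod_cast hk)
  ext z
  simp only [mem_setOf_eq]
  constructor
  · rintro ⟨h1, h2⟩
    have hz : z ≠ 0 := by rintro rfl; simp [Complex.arg_zero] at h1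
    have him : 0 < z.im := by
      rcases lt_or_ge 0 z.im with h | h
      · exact h
      · have : 0 ≤ z.arg := h1.le
        rw [Complex.arg_nonneg_iff] at this
        have him0 : z.im = 0 := le_antisymm h this
        rcases lt_trichotomy z.re 0 with hre | hre | hre
        · have : z.arg = π := Complex.arg_eq_pi_iff.2 ⟨hre, him0⟩
          rw [this] at h2; linarith
        · exact absurd (Complex.ext (by simpa using hre) (by simpa using him0)) hz
        · have : z.arg = 0 := Complex.arg_eq_zero_iff.2 ⟨hre.le, him0⟩
          rw [this] at h1; exact absurd h1 (lt_irrefl 0)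
    refine ⟨him, ?_⟩
    have habs : (0:ℝ) < ‖z‖ := norm_pos_iff.mpr hz
    conv_lhs => rw [← Complex.norm_mul_exp_arg_mul_I z]
    rw [mul_assoc, ← Complex.exp_add]
    have : (z.arg : ℂ) * Complex.I + -(π / k) * Complex.I = ((z.arg - π / k : ℝ) : ℂ) * Complex.I := by
      push_cast; ring
    rw [this]
    rw [Complex.im_ofReal_mul, Complex.exp_ofReal_mul_I_im]
    apply mul_neg_of_pos_of_neg habs
    apply Real.sin_neg_of_neg_of_neg_pi_lt (by linarith)
    have := Complex.neg_pi_lt_arg z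
    linarith
  · rintro ⟨him, hneg⟩
    have hz : z ≠ 0 := by rintro rfl; simp at him
    have h1 : 0 < z.arg := by
      rcases (Complex.arg_nonneg_iff.2 him.le).lt_or_eq with h | h
      · exact h
      · exfalso
        have := Complex.arg_eq_zero_iff.1 h.symm
        linarith [this.2, him]
    refine ⟨h1, ?_⟩
    have h2 : z.arg < π := by
      rcases (Complex.arg_le_pi z).lt_or_eq with h | h
      · exact h
      · exfalso; have := Complex.arg_eq_pi_iff.1 h; linarith [this.2, him]
    by_contra hge
    push_neg at hge
    have habs : (0:ℝ) < ‖z‖ := norm_pos_iff.mpr hz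
    rw [show z = ↑(‖z‖) * Complex.exp (z.arg * Complex.I) from (Complex.norm_mul_exp_arg_mul_I z).symm] at hneg
    rw [mul_assoc, ← Complex.exp_add] at hneg
    rw [show (z.arg : ℂ) * Complex.I + -(π / k) * Complex.I = ((z.arg - π / k : ℝ) : ℂ) * Complex.I by push_cast; ring] at hneg
    rw [Complex.im_ofReal_mul, Complex.exp_ofReal_mul_I_im] at hneg
    have : 0 ≤ Real.sin (z.arg - π / k) :=
      Real.sin_nonneg_of_nonneg_of_le_pi (by linarith) (by linarith [Real.pi_pos])
    nlinarith

lemma mul_exp_im (w : ℂ) (θ : ℝ) :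
    (w * Complex.exp (θ * Complex.I)).im = w.re * Real.sin θ + w.im * Real.cos θ := by
  rw [Complex.mul_im, Complex.exp_ofReal_mul_I_im, Complex.exp_ofReal_mul_I_re]

lemma isOpen_sector (k : ℕ) (hk : 0 < k) :
    IsOpen {z : ℂ | 0 < Complex.arg z ∧ Complex.arg z < π / k} := by
  rw [sector_eq k hk]
  have h1 : IsOpen {z : ℂ | 0 < z.im} := by
    exact isOpen_lt continuous_const Complex.continuous_im
  have h2 : IsOpen {z : ℂ | (z * Complex.exp (-(π / k) * Complex.I)).im < 0} := by
    exact isOpen_lt (Complex.continuous_im.comp (continuous_mul_right _)) continuous_const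
  exact h1.inter h2

lemma aux_mem_S (k : ℕ) (hk : 0 < k) (w : ℂ) (hw1 : 0 ≤ w.im)
    (hw2 : (w * Complex.exp (-(π / k) * Complex.I)).im ≤ 0) (δ : ℝ) (hδ : 0 < δ) :
    w + δ * Complex.exp ((π / (2 * k) : ℝ) * Complex.I) ∈
      {z : ℂ | 0 < Complex.arg z ∧ Complex.arg z < π / k} := by
  have hk' : (1:ℝ) ≤ k := by exact_mod_cast hk
  have hs : 0 < Real.sin (π / (2 * k)) := by
    apply Real.sin_pos_of_pos_of_lt_pi
    · positivity
    · calc π / (2 * k) ≤ π / 2 := by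
            apply div_le_div_of_nonneg_left Real.pi_pos.le (by norm_num) (by linarith)
        _ < π := by linarith [Real.pi_pos]
  rw [sector_eq k hk]
  constructor
  · have : ((δ:ℂ) * Complex.exp ((π / (2 * k) : ℝ) * Complex.I)).im = δ * Real.sin (π / (2 * k)) := by
      rw [Complex.im_ofReal_mul, Complex.exp_ofReal_mul_I_im]
    simp only [Complex.add_im, this]
    nlinarith
  · simp only [mem_setOf_eq, add_mul, Complex.add_im]
    have key : ((δ:ℂ) * Complex.exp ((π / (2 * k) : ℝ) * Complex.I) *
        Complex.exp (-(π / k) * Complex.I)).im = -(δ * Real.sin (π / (2 * k))) := by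
      rw [mul_assoc, ← Complex.exp_add]
      have : (π / (2 * k) : ℝ) * Complex.I + -(π / k) * Complex.I
          = ((-(π / (2 * k)) : ℝ) : ℂ) * Complex.I := by
        push_cast
        have : (π:ℂ) / (2 * k) + -(π / k) = -(π / (2*k)) := by
          field_simp
          ring
        rw [← this]; ring
      rw [this, Complex.im_ofReal_mul, Complex.exp_ofReal_mul_I_im, Real.sin_neg]
      ring
    rw [key]
    nlinarith

lemma mem_frontier_sector (k : ℕ) (hk : 0 < k) (w : ℂ) (hw1 : 0 ≤ w.im)
    (hw2 : (w * Complex.exp (-(π / k) * Complex.I)).im ≤ 0)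
    (hwS : w ∉ {z : ℂ | 0 < Complex.arg z ∧ Complex.arg z < π / k}) :
    w ∈ frontier {z : ℂ | 0 < Complex.arg z ∧ Complex.arg z < π / k} := by
  rw [frontier, (isOpen_sector k hk).interior_eq]
  refine ⟨?_, hwS⟩
  rw [Metric.mem_closure_iff]
  intro ε hε
  refine ⟨w + (ε/2 : ℝ) * Complex.exp ((π / (2 * k) : ℝ) * Complex.I),
    aux_mem_S k hk w hw1 hw2 (ε/2) (by linarith), ?_⟩
  rw [Complex.dist_eq]
  have : w - (w + (ε/2 : ℝ) * Complex.exp ((π / (2 * k) : ℝ) * Complex.I))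
      = -((ε/2 : ℝ) * Complex.exp ((π / (2 * k) : ℝ) * Complex.I)) := by ring
  rw [this, norm_neg, norm_mul, Complex.norm_exp_ofReal_mul_I, Complex.norm_real, Real.norm_eq_abs,
    _root_.abs_of_pos (by linarith : (0:ℝ) < ε/2)]
  linarith

lemma real_mem_frontier (k : ℕ) (hk : 0 < k) (t : ℝ) (ht : 0 ≤ t) :
    (t : ℂ) ∈ frontier {z : ℂ | 0 < Complex.arg z ∧ Complex.arg z < π / k} := by
  have hk' : (1:ℝ) ≤ k := by exact_mod_cast hk
  have hsin : 0 ≤ Real.sin (π / k) := by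
    apply Real.sin_nonneg_of_nonneg_of_le_pi
    · positivity
    · exact div_le_self Real.pi_pos.le hk'
  apply mem_frontier_sector k hk
  · simp
  · have hcast : (-(↑π / (k:ℂ)) : ℂ) = ((-(π / k) : ℝ) : ℂ) := by push_cast; ring
    rw [hcast, Complex.im_ofReal_mul, Complex.exp_ofReal_mul_I_im, Real.sin_neg]
    nlinarith
  · intro hS
    simp only [mem_setOf_eq] at hS
    rw [Complex.arg_ofReal_of_nonneg ht] at hS
    exact lt_irrefl 0 hS.1

lemma ray_mem_frontier (k : ℕ) (hk : 0 < k) (t : ℝ) (ht : 0 ≤ t) :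
    ((t : ℂ) * Complex.exp ((π / k : ℝ) * Complex.I)) ∈
      frontier {z : ℂ | 0 < Complex.arg z ∧ Complex.arg z < π / k} := by
  have hk' : (1:ℝ) ≤ k := by exact_mod_cast hk
  have hπk : 0 < π / k := div_pos Real.pi_pos (by linarith)
  have hsin : 0 ≤ Real.sin (π / k) := by
    apply Real.sin_nonneg_of_nonneg_of_le_pi hπk.le
    exact div_le_self Real.pi_pos.le hk'
  apply mem_frontier_sector k hk
  · rw [Complex.im_ofReal_mul, Complex.exp_ofReal_mul_I_im]
    positivity
  · rw [mul_assoc, ← Complex.exp_add]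
    have : ((π / k : ℝ) : ℂ) * Complex.I + -(π / k) * Complex.I = 0 := by push_cast; ring
    rw [this, Complex.exp_zero, mul_one]
    simp
  · intro hS
    simp only [mem_setOf_eq] at hS
    rcases eq_or_lt_of_le ht with h | h
    · rw [← h] at hS
      simp only [Complex.ofReal_zero, zero_mul, mem_setOf_eq, Complex.arg_zero] at hS
      exact lt_irrefl 0 hS.1
    · have harg : Complex.arg ((t : ℂ) * Complex.exp ((π / k : ℝ) * Complex.I)) = π / k := by
        rw [Complex.arg_real_mul _ h, Complex.exp_mul_I]
        exact Complex.arg_cos_add_sin_mul_I ⟨by linarith [Real.pi_pos], div_le_self Real.pi_pos.le hk'⟩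
      rw [harg] at hS
      exact lt_irrefl _ hS.2

lemma abs_sub_proj (a θ φ : ℝ) :
    ‖(a : ℂ) * Complex.exp ((θ : ℝ) * Complex.I) -
      ((a * Real.cos (θ - φ) : ℝ) : ℂ) * Complex.exp ((φ : ℝ) * Complex.I)‖ =
      |a * Real.sin (θ - φ)| := by
  have key : (a : ℂ) * Complex.exp ((θ : ℝ) * Complex.I) -
      ((a * Real.cos (θ - φ) : ℝ) : ℂ) * Complex.exp ((φ : ℝ) * Complex.I) =
      (((a * Real.sin (θ - φ) : ℝ) : ℂ) * Complex.I) * Complex.exp ((φ : ℝ) * Complex.I) := by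
    have hθ : ((θ : ℝ) : ℂ) * Complex.I = ((θ - φ : ℝ) : ℂ) * Complex.I + ((φ : ℝ) : ℂ) * Complex.I := by
      push_cast; ring
    rw [hθ, Complex.exp_add, ← mul_assoc, ← sub_mul]
    congr 1
    rw [Complex.exp_mul_I, ← Complex.ofReal_cos, ← Complex.ofReal_sin]
    push_cast
    ring
  rw [key, norm_mul, norm_mul, Complex.norm_exp_ofReal_mul_I, Complex.norm_I, Complex.norm_real, Real.norm_eq_abs,
    mul_one, mul_one]

lemma sin_le_sin_nat_mul (k : ℕ) (hk : 0 < k) (β : ℝ) (hβ : 0 ≤ β) (hβ2 : (k : ℝ) * β ≤ π / 2) :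
    Real.sin β ≤ Real.sin ((k : ℝ) * β) := by
  have hk' : (1 : ℝ) ≤ k := by exact_mod_cast hk
  have h1 : β ≤ (k : ℝ) * β := le_mul_of_one_le_left hβ hk'
  exact Real.sin_le_sin_of_le_of_le_pi_div_two (by linarith [Real.pi_pos]) hβ2 h1

lemma infDist_sector_le (k : ℕ) (hk : 0 < k) (z : ℂ)
    (hz : z ∈ {z : ℂ | 0 < Complex.arg z ∧ Complex.arg z < π / k}) :
    Metric.infDist z (frontier {z : ℂ | 0 < Complex.arg z ∧ Complex.arg z < π / k}) ≤
      ‖z‖ * Real.sin (k * Complex.arg z) := by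
  have hk' : (1:ℝ) ≤ k := by exact_mod_cast hk
  have hk0 : (0:ℝ) < k := by linarith
  obtain ⟨hθ1, hθ2⟩ := hz
  set θ := Complex.arg z with hθdef
  have hzne : z ≠ 0 := by
    rintro rfl
    rw [hθdef, Complex.arg_zero] at hθ1
    exact lt_irrefl 0 hθ1
  have ha : 0 < ‖z‖ := norm_pos_iff.mpr hzne
  set a := ‖z‖ with hadef
  have hz_eq : z = (a : ℂ) * Complex.exp ((θ : ℝ) * Complex.I) :=
    (Complex.norm_mul_exp_arg_mul_I z).symm
  by_cases hc : θ ≤ π / (2 * k)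
  · -- use real axis witness
    have hcosnn : 0 ≤ Real.cos θ := by
      apply Real.cos_nonneg_of_neg_pi_div_two_le_of_le (by linarith [Real.pi_pos])
      calc θ ≤ π / (2 * k) := hc
        _ ≤ π / 2 := by
          apply div_le_div_of_nonneg_left Real.pi_pos.le (by norm_num) (by linarith)
    have hmem := real_mem_frontier k hk (a * Real.cos θ) (by positivity)
    refine (Metric.infDist_le_dist_of_mem hmem).trans ?_
    rw [Complex.dist_eq]
    have : ((a * Real.cos θ : ℝ) : ℂ) = ((a * Real.cos (θ - 0) : ℝ) : ℂ) * Complex.exp (((0:ℝ)) * Complex.I) := by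
      rw [sub_zero]
      norm_num
    rw [this, hz_eq, abs_sub_proj]
    rw [sub_zero, abs_mul, _root_.abs_of_pos ha]
    apply mul_le_mul_of_nonneg_left _ ha.le
    rw [_root_.abs_of_nonneg (Real.sin_nonneg_of_nonneg_of_le_pi hθ1.le
      (by calc θ ≤ π / (2*k) := hc
            _ ≤ π := by
              rw [div_le_iff₀ (by linarith)]
              nlinarith [Real.pi_pos]))]
    calc Real.sin θ ≤ Real.sin ((k:ℝ) * θ) := by
          apply sin_le_sin_nat_mul k hk θ hθ1.le
          calc (k:ℝ) * θ ≤ (k:ℝ) * (π / (2*k)) := mul_le_mul_of_nonneg_left hc hk0.le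
            _ = π / 2 := by field_simp
      _ = Real.sin (k * θ) := rfl
  · -- use ray witness
    push_neg at hc
    set β := π / k - θ with hβdef
    have hβ1 : 0 < β := by simp only [hβdef]; linarith
    have hβ2 : β < π / (2 * k) := by
      have : π / k = 2 * (π / (2 * k)) := by field_simp
      simp only [hβdef]
      linarith [hc, this ▸ le_refl (π / k)]
    have hcosnn : 0 ≤ Real.cos (θ - π / k) := by
      rw [show θ - π / k = -β by rw [hβdef]; ring, Real.cos_neg]
      apply Real.cos_nonneg_of_neg_pi_div_two_le_of_le (by linarith [Real.pi_pos])
      calc β ≤ π / (2 * k) := hβ2.le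
        _ ≤ π / 2 := by
          apply div_le_div_of_nonneg_left Real.pi_pos.le (by norm_num) (by linarith)
    have hmem := ray_mem_frontier k hk (a * Real.cos (θ - π / k)) (by positivity)
    refine (Metric.infDist_le_dist_of_mem hmem).trans ?_
    rw [Complex.dist_eq]
    have hrw : ((a * Real.cos (θ - π / k) : ℝ) : ℂ) * Complex.exp (((π / k : ℝ)) * Complex.I)
        = ((a * Real.cos (θ - π / k) : ℝ) : ℂ) * Complex.exp (((π / k : ℝ) : ℂ) * Complex.I) := by
      norm_cast
    rw [hz_eq, abs_sub_proj]
    rw [abs_mul, _root_.abs_of_pos ha]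
    apply mul_le_mul_of_nonneg_left _ ha.le
    have hsin : |Real.sin (θ - π / k)| = Real.sin β := by
      rw [show θ - π / k = -β by rw [hβdef]; ring, Real.sin_neg, abs_neg]
      rw [_root_.abs_of_nonneg (Real.sin_nonneg_of_nonneg_of_le_pi hβ1.le (by
        calc β ≤ π / (2*k) := hβ2.le
          _ ≤ π := by
            rw [div_le_iff₀ (by linarith)]
            nlinarith [Real.pi_pos]))]
    rw [hsin]
    have : Real.sin ((k:ℝ) * β) = Real.sin ((k:ℝ) * θ) := by
      have hkβ : (k:ℝ) * β = π - k * θ := by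
        simp only [hβdef]
        field_simp
      rw [hkβ, Real.sin_pi_sub]
    calc Real.sin β ≤ Real.sin ((k:ℝ) * β) := by
          apply sin_le_sin_nat_mul k hk β hβ1.le
          calc (k:ℝ) * β ≤ (k:ℝ) * (π / (2*k)) := mul_le_mul_of_nonneg_left hβ2.le hk0.le
            _ = π / 2 := by field_simp
      _ = Real.sin (k * θ) := this

lemma zero_mem_frontier_sector (k : ℕ) (hk : 0 < k) :
    (0 : ℂ) ∈ frontier {z : ℂ | 0 < Complex.arg z ∧ Complex.arg z < π / k} := by
  have h := real_mem_frontier k hk 0 le_rfl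
  rwa [Complex.ofReal_zero] at h

lemma infDist_sector_le_abs (k : ℕ) (hk : 0 < k) (z : ℂ) :
    Metric.infDist z (frontier {z : ℂ | 0 < Complex.arg z ∧ Complex.arg z < π / k}) ≤
      ‖z‖ := by
  have h := Metric.infDist_le_dist_of_mem (zero_mem_frontier_sector k hk) (x := z)
  rwa [Complex.dist_eq, sub_zero] at h

lemma le_infDist_sector (k : ℕ) (hk : 0 < k) (z : ℂ) (δ : ℝ) (hδ : 0 < δ)
    (h1 : δ ≤ z.im) (h2 : (z * Complex.exp (-(π / k) * Complex.I)).im ≤ -δ) :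
    δ ≤ Metric.infDist z (frontier {z : ℂ | 0 < Complex.arg z ∧ Complex.arg z < π / k}) := by
  refine le_infDist' ⟨0, zero_mem_frontier_sector k hk⟩ fun w hw => ?_
  by_contra hlt
  push_neg at hlt
  have hwS : w ∉ {z : ℂ | 0 < Complex.arg z ∧ Complex.arg z < π / k} := by
    intro hmem
    have : w ∈ interior {z : ℂ | 0 < Complex.arg z ∧ Complex.arg z < π / k} := by
      rwa [(isOpen_sector k hk).interior_eq]
    exact hw.2 this
  apply hwS
  rw [sector_eq k hk]
  have hd : ‖w - z‖ < δ := by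
    rw [← Complex.dist_eq, dist_comm]
    exact hlt
  constructor
  · have him : (w - z).im = w.im - z.im := by simp
    have hstrict : -(‖w - z‖) ≤ (w - z).im := (abs_le.1 (Complex.abs_im_le_norm _)).1
    rw [him] at hstrict
    show 0 < w.im
    linarith
  · have hexp : ((w - z) * Complex.exp (-(π / k) * Complex.I)).im
        = (w * Complex.exp (-(π / k) * Complex.I)).im - (z * Complex.exp (-(π / k) * Complex.I)).im := by
      rw [sub_mul]; simp
    have habs : |((w - z) * Complex.exp (-(π / k) * Complex.I)).im| ≤ ‖w - z‖ := by
      refine (Complex.abs_im_le_norm _).trans ?_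
      rw [norm_mul]
      have : ‖Complex.exp (-(π / k) * Complex.I)‖ = 1 := by
        rw [show (-(↑π / (k:ℂ)) : ℂ) = ((-(π / k) : ℝ) : ℂ) by push_cast; ring]
        exact Complex.norm_exp_ofReal_mul_I _
      rw [this, mul_one]
    have := (abs_le.1 habs).2
    rw [hexp] at this
    have : (w * Complex.exp (-(π / k) * Complex.I)).im
        ≤ (z * Complex.exp (-(π / k) * Complex.I)).im + ‖w - z‖ := by linarith
    linarith

lemma infDist_sector_pos (k : ℕ) (hk : 0 < k) (z : ℂ)
    (hz : z ∈ {z : ℂ | 0 < Complex.arg z ∧ Complex.arg z < π / k}) :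
    0 < Metric.infDist z (frontier {z : ℂ | 0 < Complex.arg z ∧ Complex.arg z < π / k}) := by
  have hz' := hz
  rw [sector_eq k hk] at hz'
  obtain ⟨h1, h2⟩ := hz'
  set δ := min z.im (-(z * Complex.exp (-(π / k) * Complex.I)).im) with hδdef
  have hδ : 0 < δ := lt_min h1 (by linarith)
  calc (0:ℝ) < δ := hδ
    _ ≤ _ := le_infDist_sector k hk z δ hδ (min_le_left _ _) (by
        have := min_le_right z.im (-(z * Complex.exp (-(π / k) * Complex.I)).im)
        linarith)

lemma im_pow_eq (k : ℕ) (z : ℂ) (hz : z ≠ 0) :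
    (z ^ k).im = ‖z‖ ^ k * Real.sin (k * Complex.arg z) := by
  conv_lhs => rw [← Complex.norm_mul_exp_arg_mul_I z]
  rw [mul_pow, ← Complex.exp_nat_mul]
  rw [show (k : ℂ) * ((Complex.arg z : ℝ) * Complex.I) = ((k * Complex.arg z : ℝ) : ℂ) * Complex.I by
    push_cast; ring]
  rw [show ((‖z‖ : ℝ) : ℂ) ^ k = ((‖z‖ ^ k : ℝ) : ℂ) by push_cast; ring]
  rw [Complex.im_ofReal_mul, Complex.exp_ofReal_mul_I_im]

lemma jdist_symm' {E : Type*} [PseudoMetricSpace E] (G : Set E) (x y : E) :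
    jdist G x y = jdist G y x := by
  rw [jdist, jdist, dist_comm, min_comm]

lemma key_binom (k : ℕ) (hk : 0 < k) (x y : ℂ) (m M : ℝ) (hm : 0 < m)
    (hmx : m ≤ ‖x‖) (hM : ‖x‖ ^ (k - 1) * m ≤ M) :
    ‖y ^ k - x ^ k‖ ≤ M * ((1 + ‖y - x‖ / m) ^ k - 1) := by
  set a := ‖x‖ with hadef
  set d := ‖y - x‖ with hddef
  have hd0 : 0 ≤ d := norm_nonneg _
  have ha0 : 0 < a := lt_of_lt_of_le hm hmx
  set t := d / m with htdef
  have ht0 : 0 ≤ t := div_nonneg hd0 hm.le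
  -- binomial expansion of y^k
  have hexp : y ^ k - x ^ k = ∑ i ∈ Finset.range k, x ^ i * (y - x) ^ (k - i) * (k.choose i) := by
    have h1 : (x + (y - x)) ^ k = ∑ i ∈ Finset.range (k + 1),
        x ^ i * (y - x) ^ (k - i) * (k.choose i) := add_pow x (y - x) k
    rw [add_sub_cancel] at h1
    rw [h1, Finset.sum_range_succ]
    simp
  have hexp2 : (1 + t) ^ k - 1 = ∑ i ∈ Finset.range k, t ^ (k - i) * (k.choose i) := by
    have h1 : ((1:ℝ) + t) ^ k = ∑ i ∈ Finset.range (k + 1),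
        (1:ℝ) ^ i * t ^ (k - i) * (k.choose i) := add_pow 1 t k
    have hcongr : ∀ i ∈ Finset.range k, (1:ℝ) ^ i * t ^ (k - i) * (k.choose i) =
        t ^ (k - i) * (k.choose i) := by
      intro i _
      rw [one_pow, one_mul]
    rw [h1, Finset.sum_range_succ, Finset.sum_congr rfl hcongr]
    simp
  rw [hexp, hexp2, Finset.mul_sum]
  refine (norm_sum_le _ _).trans (Finset.sum_le_sum fun i hi => ?_)
  rw [Finset.mem_range] at hi
  rw [norm_mul, norm_mul, norm_pow, norm_pow, Complex.norm_natCast]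
  rw [← hadef, ← hddef]
  have hterm : a ^ i * m ^ (k - i) ≤ M := by
    calc a ^ i * m ^ (k - i) = a ^ i * m ^ (k - i - 1) * m := by
          rw [mul_assoc, ← pow_succ]
          congr 2
          omega
      _ ≤ a ^ i * a ^ (k - i - 1) * m := by
          have h1 : m ^ (k - i - 1) ≤ a ^ (k - i - 1) := pow_le_pow_left₀ hm.le hmx _
          have h2 : (0:ℝ) ≤ a ^ i := by positivity
          exact mul_le_mul_of_nonneg_right (mul_le_mul_of_nonneg_left h1 h2) hm.le
      _ = a ^ (k - 1) * m := by
          rw [← pow_add]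
          congr 2
          omega
      _ ≤ M := hM
  have htpow : t ^ (k - i) = d ^ (k - i) / m ^ (k - i) := div_pow d m _
  have hmain : a ^ i * d ^ (k - i) ≤ M * t ^ (k - i) := by
    have hmpow : (0:ℝ) < m ^ (k - i) := by positivity
    rw [htpow, ← mul_div_assoc, le_div_iff₀ hmpow]
    calc a ^ i * d ^ (k - i) * m ^ (k - i) = (a ^ i * m ^ (k - i)) * d ^ (k - i) := by ring
      _ ≤ M * d ^ (k - i) := by
          apply mul_le_mul_of_nonneg_right hterm (by positivity)
  calc a ^ i * d ^ (k - i) * (k.choose i : ℝ)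
      ≤ M * t ^ (k - i) * (k.choose i : ℝ) := by
        apply mul_le_mul_of_nonneg_right hmain (by positivity)
    _ = M * (t ^ (k - i) * (k.choose i : ℝ)) := by ring

lemma part1_aux (k : ℕ) (hk : 0 < k) (x y : ℂ)
    (hx : x ∈ {z : ℂ | 0 < Complex.arg z ∧ Complex.arg z < π / k})
    (hy : y ∈ {z : ℂ | 0 < Complex.arg z ∧ Complex.arg z < π / k})
    (hab : ‖x‖ ≤ ‖y‖) :
    jdist {z : ℂ | 0 < z.im} (x ^ k) (y ^ k) ≤
      k * jdist {z : ℂ | 0 < Complex.arg z ∧ Complex.arg z < π / k} x y := by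
  have hk0 : (0:ℝ) < k := by exact_mod_cast hk
  set S := {z : ℂ | 0 < Complex.arg z ∧ Complex.arg z < π / k} with hSdef
  have hxne : x ≠ 0 := by
    rintro rfl
    exact lt_irrefl 0 (Complex.arg_zero ▸ hx.1)
  have hyne : y ≠ 0 := by
    rintro rfl
    exact lt_irrefl 0 (Complex.arg_zero ▸ hy.1)
  set a := ‖x‖ with hadef
  set b := ‖y‖ with hbdef
  have ha : 0 < a := norm_pos_iff.mpr hxne
  have hb : 0 < b := norm_pos_iff.mpr hyne
  set dx := Metric.infDist x (frontier S) with hdxdef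
  set dy := Metric.infDist y (frontier S) with hdydef
  have hdx : 0 < dx := infDist_sector_pos k hk x hx
  have hdy : 0 < dy := infDist_sector_pos k hk y hy
  set m := min dx dy with hmdef
  have hm : 0 < m := lt_min hdx hdy
  set t := dist x y / m with htdef
  have ht0 : 0 ≤ t := div_nonneg dist_nonneg hm.le
  -- sines
  have hsinx : 0 < Real.sin (k * Complex.arg x) := by
    apply Real.sin_pos_of_pos_of_lt_pi
    · exact mul_pos hk0 hx.1
    · have := hx.2
      calc (k:ℝ) * Complex.arg x < (k:ℝ) * (π / k) := by
            exact mul_lt_mul_of_pos_left this hk0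
        _ = π := by field_simp
  have hsiny : 0 < Real.sin (k * Complex.arg y) := by
    apply Real.sin_pos_of_pos_of_lt_pi
    · exact mul_pos hk0 hy.1
    · calc (k:ℝ) * Complex.arg y < (k:ℝ) * (π / k) := mul_lt_mul_of_pos_left hy.2 hk0
        _ = π := by field_simp
  have himx : (x ^ k).im = a ^ k * Real.sin (k * Complex.arg x) := im_pow_eq k x hxne
  have himy : (y ^ k).im = b ^ k * Real.sin (k * Complex.arg y) := im_pow_eq k y hyne
  have himx_pos : 0 < (x ^ k).im := by rw [himx]; positivity
  have himy_pos : 0 < (y ^ k).im := by rw [himy]; positivity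
  -- lower bounds on half-plane boundary distances
  have hpow_split : ∀ c : ℝ, 0 < c → c ^ k = c ^ (k - 1) * c := by
    intro c hc
    rw [← pow_succ]
    congr 1
    omega
  have hlow_x : a ^ (k - 1) * m ≤ (x ^ k).im := by
    have h1 : dx ≤ a * Real.sin (k * Complex.arg x) := infDist_sector_le k hk x hx
    have h2 : m ≤ dx := min_le_left _ _
    have h3 : a ^ (k - 1) * m ≤ a ^ (k - 1) * (a * Real.sin (k * Complex.arg x)) :=
      mul_le_mul_of_nonneg_left (h2.trans h1) (by positivity)
    rw [himx, hpow_split a ha]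
    calc a ^ (k - 1) * m ≤ a ^ (k - 1) * (a * Real.sin (k * Complex.arg x)) := h3
      _ = a ^ (k - 1) * a * Real.sin (k * Complex.arg x) := by ring
  have hlow_y : a ^ (k - 1) * m ≤ (y ^ k).im := by
    have h1 : dy ≤ b * Real.sin (k * Complex.arg y) := infDist_sector_le k hk y hy
    have h2 : m ≤ dy := min_le_right _ _
    have hpow : a ^ (k - 1) ≤ b ^ (k - 1) := pow_le_pow_left₀ ha.le hab _
    calc a ^ (k - 1) * m ≤ b ^ (k - 1) * dy := by
          apply mul_le_mul hpow h2 hm.le (by positivity)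
      _ ≤ b ^ (k - 1) * (b * Real.sin (k * Complex.arg y)) := by
          apply mul_le_mul_of_nonneg_left h1 (by positivity)
      _ = b ^ k * Real.sin (k * Complex.arg y) := by
          rw [hpow_split b hb]; ring
      _ = (y ^ k).im := himy.symm
  -- rewrite jdist on half plane
  have hfx : Metric.infDist (x ^ k) (frontier {z : ℂ | 0 < z.im}) = (x ^ k).im :=
    infDist_halfplane _ himx_pos.le
  have hfy : Metric.infDist (y ^ k) (frontier {z : ℂ | 0 < z.im}) = (y ^ k).im :=
    infDist_halfplane _ himy_pos.le
  set m' := min ((x ^ k).im) ((y ^ k).im) with hm'def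
  have hm'pos : 0 < m' := lt_min himx_pos himy_pos
  have hm'ge : a ^ (k - 1) * m ≤ m' := le_min hlow_x hlow_y
  have hmlea : m ≤ a := (min_le_left _ _).trans (infDist_sector_le_abs k hk x)
  have hkey := key_binom k hk x y m m' hm hmlea hm'ge
  rw [jdist, hfx, hfy, ← hm'def]
  rw [jdist, ← hdxdef, ← hdydef, ← hmdef]
  have hdistk : dist (x ^ k) (y ^ k) = ‖y ^ k - x ^ k‖ := by
    rw [Complex.dist_eq, ← norm_neg]
    congr 1
    ring
  have hdistxy : ‖y - x‖ = dist x y := by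
    rw [Complex.dist_eq, ← norm_neg]
    congr 1
    ring
  rw [hdistxy] at hkey
  have hstep : 1 + dist (x ^ k) (y ^ k) / m' ≤ (1 + t) ^ k := by
    have h1 : dist (x ^ k) (y ^ k) / m' ≤ (1 + t) ^ k - 1 := by
      rw [div_le_iff₀ hm'pos, hdistk]
      calc ‖y ^ k - x ^ k‖ ≤ m' * ((1 + dist x y / m) ^ k - 1) := hkey
        _ = ((1 + t) ^ k - 1) * m' := by rw [← htdef]; ring
    linarith
  calc Real.log (1 + dist (x ^ k) (y ^ k) / m')
      ≤ Real.log ((1 + t) ^ k) := by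
        apply Real.log_le_log (by positivity) hstep
    _ = k * Real.log (1 + t) := by rw [Real.log_pow]
    _ = k * Real.log (1 + dist x y / m) := by rw [htdef]

lemma sin_alpha_le_sin_beta {α β : ℝ} (hα : 0 ≤ α) (hβ1 : α ≤ β) (hβ2 : β ≤ π - α)
    (hαhalf : α ≤ π / 2) :
    Real.sin α ≤ Real.sin β := by
  rcases le_or_gt β (π / 2) with h | h
  · exact Real.sin_le_sin_of_le_of_le_pi_div_two (by linarith [Real.pi_pos]) h hβ1
  · rw [← Real.sin_pi_sub β]
    exact Real.sin_le_sin_of_le_of_le_pi_div_two (by linarith [Real.pi_pos]) (by linarith)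
      (by linarith)

lemma infDist_sector_exact (k : ℕ) (hk : 0 < k) (α : ℝ) (hα1 : 0 < α) (hα2 : α < π / (2 * k))
    (r : ℝ) (hr : 0 < r) :
    Metric.infDist ((r : ℂ) * Complex.exp ((α : ℝ) * Complex.I))
      (frontier {z : ℂ | 0 < Complex.arg z ∧ Complex.arg z < π / k}) = r * Real.sin α := by
  have hk' : (1:ℝ) ≤ k := by exact_mod_cast hk
  have hk0 : (0:ℝ) < k := by linarith
  have hπ2k : 0 < π / (2 * k) := by positivity
  have h2k2 : π / (2 * k) ≤ π / 2 :=
    div_le_div_of_nonneg_left Real.pi_pos.le (by norm_num) (by linarith)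
  have hαhalf : α < π / 2 := lt_of_lt_of_le hα2 h2k2
  have hsinα : 0 < Real.sin α := Real.sin_pos_of_pos_of_lt_pi hα1 (by linarith [Real.pi_pos])
  apply le_antisymm
  · -- upper bound: real axis witness
    have hcos : 0 ≤ Real.cos α := Real.cos_nonneg_of_neg_pi_div_two_le_of_le
      (by linarith [Real.pi_pos]) hαhalf.le
    have hmem := real_mem_frontier k hk (r * Real.cos α) (by positivity)
    refine (Metric.infDist_le_dist_of_mem hmem).trans_eq ?_
    rw [Complex.dist_eq]
    have : ((r * Real.cos α : ℝ) : ℂ) = ((r * Real.cos (α - 0) : ℝ) : ℂ) *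
        Complex.exp (((0:ℝ)) * Complex.I) := by
      rw [sub_zero]; norm_num
    rw [this, abs_sub_proj, sub_zero, abs_mul, _root_.abs_of_pos hr,
      _root_.abs_of_nonneg hsinα.le]
  · -- lower bound
    apply le_infDist_sector k hk _ _ (by positivity)
    · rw [Complex.im_ofReal_mul, Complex.exp_ofReal_mul_I_im]
    · have hcomb : (r : ℂ) * Complex.exp ((α : ℝ) * Complex.I) * Complex.exp (-(π / k) * Complex.I)
          = (r : ℂ) * Complex.exp (((α - π / k : ℝ)) * Complex.I) := by
        rw [mul_assoc, ← Complex.exp_add]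
        congr 2
        push_cast
        ring
      rw [hcomb, Complex.im_ofReal_mul, Complex.exp_ofReal_mul_I_im]
      have hsin2 : Real.sin (α - π / k) = -Real.sin (π / k - α) := by
        rw [← Real.sin_neg]; congr 1; ring
      rw [hsin2]
      have hle : Real.sin α ≤ Real.sin (π / k - α) := by
        apply sin_alpha_le_sin_beta hα1.le
        · have : π / k = 2 * (π / (2 * k)) := by field_simp
          linarith
        · have : π / k ≤ π := div_le_self Real.pi_pos.le hk'
          linarith
        · exact hαhalf.le
      nlinarith

lemma part2_num (k : ℕ) (hk : 0 < k) (α : ℝ) (hα1 : 0 < α) (hα2 : α < π / (2 * k))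
    (r : ℝ) (hr : 0 < r) (hr1 : r < 1) :
    jdist {z : ℂ | 0 < z.im} (((r : ℂ) * Complex.exp ((α:ℝ) * Complex.I)) ^ k)
      ((Complex.exp ((α:ℝ) * Complex.I)) ^ k)
      = (k : ℝ) * (-Real.log r) + (Real.log (1 - r ^ k * (1 - Real.sin (k * α)))
        - Real.log (Real.sin (k * α))) := by
  have hk' : (1:ℝ) ≤ k := by exact_mod_cast hk
  have hk0 : (0:ℝ) < k := by linarith
  have hkα : 0 < (k:ℝ) * α := by positivity
  have hkα2 : (k:ℝ) * α < π / 2 := by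
    calc (k:ℝ) * α < (k:ℝ) * (π / (2 * k)) := mul_lt_mul_of_pos_left hα2 hk0
      _ = π / 2 := by field_simp
  have hs₁ : 0 < Real.sin (k * α) :=
    Real.sin_pos_of_pos_of_lt_pi hkα (by linarith [Real.pi_pos])
  have hs₁le : Real.sin (k * α) ≤ 1 := Real.sin_le_one _
  have hrk : 0 < r ^ k := by positivity
  have hrk1 : r ^ k < 1 := pow_lt_one₀ hr.le hr1 (by omega)
  set s₁ := Real.sin (k * α) with hs₁def
  -- rewrite the powers
  have hx' : ((r : ℂ) * Complex.exp ((α:ℝ) * Complex.I)) ^ k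
      = ((r ^ k : ℝ) : ℂ) * Complex.exp (((k * α : ℝ)) * Complex.I) := by
    rw [mul_pow, ← Complex.exp_nat_mul]
    push_cast
    ring_nf
  have hy' : (Complex.exp ((α:ℝ) * Complex.I)) ^ k
      = Complex.exp (((k * α : ℝ)) * Complex.I) := by
    rw [← Complex.exp_nat_mul]
    push_cast
    ring_nf
  rw [hx', hy', jdist]
  have him1 : (((r ^ k : ℝ) : ℂ) * Complex.exp (((k * α : ℝ)) * Complex.I)).im = r ^ k * s₁ := by
    rw [Complex.im_ofReal_mul, Complex.exp_ofReal_mul_I_im, hs₁def]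
  have him2 : (Complex.exp (((k * α : ℝ)) * Complex.I)).im = s₁ := by
    rw [Complex.exp_ofReal_mul_I_im, hs₁def]
  rw [infDist_halfplane _ (by rw [him1]; positivity),
    infDist_halfplane _ (by rw [him2]; positivity), him1, him2]
  have hdist : dist (((r ^ k : ℝ) : ℂ) * Complex.exp (((k * α : ℝ)) * Complex.I))
      (Complex.exp (((k * α : ℝ)) * Complex.I)) = 1 - r ^ k := by
    rw [Complex.dist_eq]
    have : ((r ^ k : ℝ) : ℂ) * Complex.exp (((k * α : ℝ)) * Complex.I)
        - Complex.exp (((k * α : ℝ)) * Complex.I)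
        = (((r ^ k - 1 : ℝ)) : ℂ) * Complex.exp (((k * α : ℝ)) * Complex.I) := by
      push_cast
      ring
    rw [this, norm_mul, Complex.norm_exp_ofReal_mul_I, mul_one, Complex.norm_real, Real.norm_eq_abs,
      abs_of_neg (by linarith)]
    ring
  rw [hdist]
  have hmin : min (r ^ k * s₁) s₁ = r ^ k * s₁ := by
    apply min_eq_left
    nlinarith
  rw [hmin]
  have harg : 1 + (1 - r ^ k) / (r ^ k * s₁) = (1 - r ^ k * (1 - s₁)) / (r ^ k * s₁) := by
    field_simp
    ring
  rw [harg]
  have hnum : 0 < 1 - r ^ k * (1 - s₁) := by nlinarith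
  rw [Real.log_div hnum.ne' (by positivity)]
  rw [Real.log_mul (by positivity) hs₁.ne', Real.log_pow]
  ring

lemma part2_den (k : ℕ) (hk : 0 < k) (α : ℝ) (hα1 : 0 < α) (hα2 : α < π / (2 * k))
    (r : ℝ) (hr : 0 < r) (hr1 : r < 1) :
    jdist {z : ℂ | 0 < Complex.arg z ∧ Complex.arg z < π / k}
      ((r : ℂ) * Complex.exp ((α:ℝ) * Complex.I)) (Complex.exp ((α:ℝ) * Complex.I))
      = -Real.log r + (Real.log (1 - r * (1 - Real.sin α)) - Real.log (Real.sin α)) := by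
  have hk' : (1:ℝ) ≤ k := by exact_mod_cast hk
  have hk0 : (0:ℝ) < k := by linarith
  have hαhalf : α < π / 2 := lt_of_lt_of_le hα2
    (div_le_div_of_nonneg_left Real.pi_pos.le (by norm_num) (by linarith))
  have hs₂ : 0 < Real.sin α := Real.sin_pos_of_pos_of_lt_pi hα1 (by linarith [Real.pi_pos])
  set s₂ := Real.sin α with hs₂def
  have hs₂le : s₂ ≤ 1 := Real.sin_le_one _
  rw [jdist]
  have h1 : Metric.infDist ((r : ℂ) * Complex.exp ((α:ℝ) * Complex.I))
      (frontier {z : ℂ | 0 < Complex.arg z ∧ Complex.arg z < π / k}) = r * s₂ :=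
    infDist_sector_exact k hk α hα1 hα2 r hr
  have h2 : Metric.infDist (Complex.exp ((α:ℝ) * Complex.I))
      (frontier {z : ℂ | 0 < Complex.arg z ∧ Complex.arg z < π / k}) = s₂ := by
    have := infDist_sector_exact k hk α hα1 hα2 1 one_pos
    rw [Complex.ofReal_one, one_mul, one_mul] at this
    exact this
  rw [h1, h2]
  have hdist : dist ((r : ℂ) * Complex.exp ((α:ℝ) * Complex.I))
      (Complex.exp ((α:ℝ) * Complex.I)) = 1 - r := by
    rw [Complex.dist_eq]
    have : (r : ℂ) * Complex.exp ((α:ℝ) * Complex.I) - Complex.exp ((α:ℝ) * Complex.I)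
        = (((r - 1 : ℝ)) : ℂ) * Complex.exp ((α:ℝ) * Complex.I) := by
      push_cast
      ring
    rw [this, norm_mul, Complex.norm_exp_ofReal_mul_I, mul_one, Complex.norm_real, Real.norm_eq_abs,
      abs_of_neg (by linarith)]
    ring
  rw [hdist]
  have hmin : min (r * s₂) s₂ = r * s₂ := by
    apply min_eq_left
    nlinarith
  rw [hmin]
  have harg : 1 + (1 - r) / (r * s₂) = (1 - r * (1 - s₂)) / (r * s₂) := by
    field_simp
    ring
  rw [harg]
  have hnum : 0 < 1 - r * (1 - s₂) := by nlinarith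
  rw [Real.log_div hnum.ne' (by positivity)]
  rw [Real.log_mul hr.ne' hs₂.ne']
  ring

lemma part2_limit (k : ℕ) (hk : 0 < k) (α : ℝ) (hα1 : 0 < α) (hα2 : α < π / (2 * k)) :
    Tendsto (fun r : ℝ =>
        jdist {z : ℂ | 0 < z.im}
            (((r : ℂ) * Complex.exp ((α:ℝ) * Complex.I)) ^ k)
            ((Complex.exp ((α:ℝ) * Complex.I)) ^ k) /
          jdist {z : ℂ | 0 < Complex.arg z ∧ Complex.arg z < π / k}
            ((r : ℂ) * Complex.exp ((α:ℝ) * Complex.I)) (Complex.exp ((α:ℝ) * Complex.I)))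
      (𝓝[>] 0) (𝓝 k) := by
  have hk' : (1:ℝ) ≤ k := by exact_mod_cast hk
  have hk0 : (0:ℝ) < k := by linarith
  have hαhalf : α < π / 2 := lt_of_lt_of_le hα2
    (div_le_div_of_nonneg_left Real.pi_pos.le (by norm_num) (by linarith))
  have hs₂ : 0 < Real.sin α := Real.sin_pos_of_pos_of_lt_pi hα1 (by linarith [Real.pi_pos])
  have hkα2 : (k:ℝ) * α < π / 2 := by
    calc (k:ℝ) * α < (k:ℝ) * (π / (2 * k)) := mul_lt_mul_of_pos_left hα2 hk0
      _ = π / 2 := by field_simp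
  have hs₁ : 0 < Real.sin (k * α) :=
    Real.sin_pos_of_pos_of_lt_pi (by positivity) (by linarith [Real.pi_pos])
  have hs₁le : Real.sin (k * α) ≤ 1 := Real.sin_le_one _
  have hs₂le : Real.sin α ≤ 1 := Real.sin_le_one _
  set s₁ := Real.sin (k * α) with hs₁def
  set s₂ := Real.sin α with hs₂def
  set A : ℝ → ℝ := fun r => Real.log (1 - r ^ k * (1 - s₁)) - Real.log s₁ with hAdef
  set B : ℝ → ℝ := fun r => Real.log (1 - r * (1 - s₂)) - Real.log s₂ with hBdef
  set L : ℝ → ℝ := fun r => -Real.log r with hLdef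
  -- limits of components
  have hL : Tendsto L (𝓝[>] (0:ℝ)) atTop :=
    tendsto_neg_atBot_atTop.comp Real.tendsto_log_nhdsGT_zero
  have hLinv : Tendsto (fun r => (L r)⁻¹) (𝓝[>] (0:ℝ)) (𝓝 0) := hL.inv_tendsto_atTop
  have hA : Tendsto A (𝓝[>] (0:ℝ)) (𝓝 (-Real.log s₁)) := by
    have hcont : Tendsto (fun r : ℝ => 1 - r ^ k * (1 - s₁)) (𝓝[>] (0:ℝ))
        (𝓝 (1 - 0 ^ k * (1 - s₁))) :=
      ((continuous_const.sub ((continuous_pow k).mul continuous_const)).tendsto 0).mono_left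
        nhdsWithin_le_nhds
    rw [zero_pow hk.ne', zero_mul, sub_zero] at hcont
    have hlog : Tendsto (fun r : ℝ => Real.log (1 - r ^ k * (1 - s₁))) (𝓝[>] (0:ℝ))
        (𝓝 (Real.log 1)) := ((Real.continuousAt_log one_ne_zero).tendsto).comp hcont
    rw [Real.log_one] at hlog
    have := hlog.sub_const (Real.log s₁)
    simpa [hAdef] using this
  have hB : Tendsto B (𝓝[>] (0:ℝ)) (𝓝 (-Real.log s₂)) := by
    have hcont : Tendsto (fun r : ℝ => 1 - r * (1 - s₂)) (𝓝[>] (0:ℝ))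
        (𝓝 (1 - 0 * (1 - s₂))) :=
      ((continuous_const.sub (continuous_id.mul continuous_const)).tendsto 0).mono_left
        nhdsWithin_le_nhds
    rw [zero_mul, sub_zero] at hcont
    have hlog : Tendsto (fun r : ℝ => Real.log (1 - r * (1 - s₂))) (𝓝[>] (0:ℝ))
        (𝓝 (Real.log 1)) := ((Real.continuousAt_log one_ne_zero).tendsto).comp hcont
    rw [Real.log_one] at hlog
    have := hlog.sub_const (Real.log s₂)
    simpa [hBdef] using this
  have hAL : Tendsto (fun r => A r / L r) (𝓝[>] (0:ℝ)) (𝓝 0) := by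
    have := hA.mul hLinv
    rw [mul_zero] at this
    exact this.congr fun r => (div_eq_mul_inv _ _).symm
  have hBL : Tendsto (fun r => B r / L r) (𝓝[>] (0:ℝ)) (𝓝 0) := by
    have := hB.mul hLinv
    rw [mul_zero] at this
    exact this.congr fun r => (div_eq_mul_inv _ _).symm
  have hfinal : Tendsto (fun r => ((k:ℝ) + A r / L r) / (1 + B r / L r)) (𝓝[>] (0:ℝ))
      (𝓝 ((k + 0) / (1 + 0))) :=
    Tendsto.div ((tendsto_const_nhds).add hAL) ((tendsto_const_nhds).add hBL) (by norm_num)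
  rw [show ((k:ℝ) + 0) / (1 + 0) = (k:ℝ) by norm_num] at hfinal
  refine Tendsto.congr' ?_ hfinal
  have hmem : Ioo (0:ℝ) 1 ∈ 𝓝[>] (0:ℝ) := Ioo_mem_nhdsGT_of_mem ⟨le_refl 0, one_pos⟩
  filter_upwards [hmem] with r hr
  obtain ⟨hr0, hr1⟩ := hr
  have hlogneg : Real.log r < 0 := Real.log_neg hr0 hr1
  have hLpos : 0 < L r := by
    simp only [hLdef]
    linarith
  have hLne : L r ≠ 0 := hLpos.ne'
  -- denominators
  have hrk : 0 < r ^ k := by positivity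
  have hrk1 : r ^ k < 1 := pow_lt_one₀ hr0.le hr1 (by omega)
  have hLBpos : 0 < L r + B r := by
    have h1 : Real.log (r * s₂) < Real.log (1 - r * (1 - s₂)) := by
      apply Real.log_lt_log (by positivity)
      nlinarith
    rw [Real.log_mul hr0.ne' hs₂.ne'] at h1
    simp only [hLdef, hBdef]
    linarith
  have hnum_eq : jdist {z : ℂ | 0 < z.im} (((r : ℂ) * Complex.exp ((α:ℝ) * Complex.I)) ^ k)
      ((Complex.exp ((α:ℝ) * Complex.I)) ^ k) = (k:ℝ) * L r + A r := by
    rw [part2_num k hk α hα1 hα2 r hr0 hr1]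
  have hden_eq : jdist {z : ℂ | 0 < Complex.arg z ∧ Complex.arg z < π / k}
      ((r : ℂ) * Complex.exp ((α:ℝ) * Complex.I)) (Complex.exp ((α:ℝ) * Complex.I))
      = L r + B r := by
    rw [part2_den k hk α hα1 hα2 r hr0 hr1]
  rw [hden_eq, hnum_eq]
  have h1B : 1 + B r / L r = (L r + B r) / L r := by field_simp
  have h1Bne : (1:ℝ) + B r / L r ≠ 0 := by
    rw [h1B]
    positivity
  field_simp

/-- For the power map `f(z) = z^k` from the sector `S_{π/k}` to the upper half
plane, `j_{ℍ²}(f x, f y) ≤ k j_{S_{π/k}}(x, y)`, and the constant `k` is best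
possible: for `x = r e^{iα}`, `y = e^{iα}` with `α ∈ (0, π/(2k))` fixed, the
ratio tends to `k` as `r → 0⁺`. -/
theorem power_map_jdist_lipschitz_sharp (k : ℕ) (hk : 0 < k) :
    (∀ x ∈ {z : ℂ | 0 < Complex.arg z ∧ Complex.arg z < π / k},
      ∀ y ∈ {z : ℂ | 0 < Complex.arg z ∧ Complex.arg z < π / k},
        jdist {z : ℂ | 0 < z.im} (x ^ k) (y ^ k) ≤
          k * jdist {z : ℂ | 0 < Complex.arg z ∧ Complex.arg z < π / k} x y) ∧
      ∀ α : ℝ, 0 < α → α < π / (2 * k) →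
        Tendsto (fun r : ℝ =>
            jdist {z : ℂ | 0 < z.im}
                (((r : ℂ) * Complex.exp (α * Complex.I)) ^ k)
                ((Complex.exp (α * Complex.I)) ^ k) /
              jdist {z : ℂ | 0 < Complex.arg z ∧ Complex.arg z < π / k}
                ((r : ℂ) * Complex.exp (α * Complex.I)) (Complex.exp (α * Complex.I)))
          (𝓝[>] 0) (𝓝 k) := by
  constructor
  · intro x hx y hy
    rcases le_total (‖x‖) (‖y‖) with h | h
    · exact part1_aux k hk x y hx hy h
    · rw [jdist_symm' {z : ℂ | 0 < z.im},
        jdist_symm' {z : ℂ | 0 < Complex.arg z ∧ Complex.arg z < π / k}]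
      exact part1_aux k hk y x hy hx h
  · intro α hα1 hα2
    exact part2_limit k hk α hα1 hα2
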